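/- Let c ≥ 0 be a real number and define f : (0,∞) → ℝ by f(ρ) = 1/(cosh ρ + c). Then for every ρ > 0, f''(ρ) + (cosh ρ / sinh ρ) · f'(ρ) = −2·(1 + c·cosh ρ)/(cosh ρ + c)³, and in particular this quantity is strictly negative. Hence f is a non-constant positive function that is superharmonic with respect to the radial hyperbolic Laplacian. -/

import Mathlib

lemma rhs_pos (c : ℝ) (hc : 0 ≤ c) (t : ℝ) : 0 < Real.cosh t + c := by
  have := Real.one_le_cosh t
  linarith

lemma deriv1 (c : ℝ) (hc : 0 ≤ c) :
    deriv (fun t : ℝ => 1 / (Real.cosh t + c))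
      = fun t : ℝ => -Real.sinh t / (Real.cosh t + c) ^ 2 := by
  funext t
  have h0 : Real.cosh t + c ≠ 0 := (rhs_pos c hc t).ne'
  have h : HasDerivAt (fun t : ℝ => 1 / (Real.cosh t + c))
      (-Real.sinh t / (Real.cosh t + c) ^ 2) t := by
    simpa [one_div, Pi.inv_def] using ((Real.hasDerivAt_cosh t).add_const c).inv h0
  exact h.deriv

lemma deriv2 (c : ℝ) (hc : 0 ≤ c) (t : ℝ) :
    deriv (deriv (fun t : ℝ => 1 / (Real.cosh t + c))) t
      = (-Real.cosh t * (Real.cosh t + c) ^ 2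
          + Real.sinh t * (2 * (Real.cosh t + c) * Real.sinh t))
        / ((Real.cosh t + c) ^ 2) ^ 2 := by
  rw [deriv1 c hc]
  have h0 : Real.cosh t + c ≠ 0 := (rhs_pos c hc t).ne'
  have hv : HasDerivAt (fun t : ℝ => (Real.cosh t + c) ^ 2)
      (2 * (Real.cosh t + c) * Real.sinh t) t := by
    have := (((Real.hasDerivAt_cosh t).add_const c).pow 2)
    simpa [mul_comm, mul_assoc, mul_left_comm, Pi.pow_def] using this
  have hu : HasDerivAt (fun t : ℝ => -Real.sinh t) (-Real.cosh t) t :=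
    (Real.hasDerivAt_sinh t).neg
  have h := hu.div hv (pow_ne_zero 2 h0)
  have h' : HasDerivAt (fun t : ℝ => -Real.sinh t / (Real.cosh t + c) ^ 2)
      ((-Real.cosh t * (Real.cosh t + c) ^ 2
        + Real.sinh t * (2 * (Real.cosh t + c) * Real.sinh t))
        / ((Real.cosh t + c) ^ 2) ^ 2) t := by
    exact h.congr_deriv (by ring)
  exact h'.deriv

theorem radial_hyperbolic_superharmonic
    (c : ℝ) (hc : 0 ≤ c) :
    (∀ ρ : ℝ, 0 < ρ →
      deriv (deriv (fun t : ℝ => 1 / (Real.cosh t + c))) ρ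
          + (Real.cosh ρ / Real.sinh ρ)
              * deriv (fun t : ℝ => 1 / (Real.cosh t + c)) ρ
        = -2 * (1 + c * Real.cosh ρ) / (Real.cosh ρ + c) ^ 3)
    ∧ (∀ ρ : ℝ, 0 < ρ →
        deriv (deriv (fun t : ℝ => 1 / (Real.cosh t + c))) ρ
            + (Real.cosh ρ / Real.sinh ρ)
                * deriv (fun t : ℝ => 1 / (Real.cosh t + c)) ρ < 0)
    ∧ (∀ ρ : ℝ, 0 < ρ → 0 < 1 / (Real.cosh ρ + c))
    ∧ (∃ ρ₁ ρ₂ : ℝ, 0 < ρ₁ ∧ 0 < ρ₂ ∧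
        1 / (Real.cosh ρ₁ + c) ≠ 1 / (Real.cosh ρ₂ + c)) := by
  have key : ∀ ρ : ℝ, 0 < ρ →
      deriv (deriv (fun t : ℝ => 1 / (Real.cosh t + c))) ρ
          + (Real.cosh ρ / Real.sinh ρ)
              * deriv (fun t : ℝ => 1 / (Real.cosh t + c)) ρ
        = -2 * (1 + c * Real.cosh ρ) / (Real.cosh ρ + c) ^ 3 := by
    intro ρ hρ
    have h0 : Real.cosh ρ + c ≠ 0 := (rhs_pos c hc ρ).ne'
    have hs : Real.sinh ρ ≠ 0 := (Real.sinh_pos_iff.mpr hρ).ne'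
    rw [deriv2 c hc, deriv1 c hc]
    have hcs : Real.cosh ρ ^ 2 = 1 + Real.sinh ρ ^ 2 := by
      have := Real.cosh_sq_sub_sinh_sq ρ; linarith
    field_simp
    linear_combination (-2) * hcs
  refine ⟨key, fun ρ hρ => ?_, fun ρ _ => one_div_pos.mpr (rhs_pos c hc ρ), ?_⟩
  · rw [key ρ hρ]
    apply div_neg_of_neg_of_pos
    · nlinarith [Real.one_le_cosh ρ]
    · positivity
  · refine ⟨1, 2, one_pos, two_pos, ?_⟩
    have h12 : Real.cosh 1 + c < Real.cosh 2 + c := by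
      have : Real.cosh 1 < Real.cosh 2 := by
        rw [Real.cosh_lt_cosh]; rw [abs_of_pos one_pos, abs_of_pos two_pos]; norm_num
      linarith
    exact ne_of_gt (one_div_lt_one_div_of_lt (rhs_pos c hc 1) h12)
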